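/- arXiv:2305.04058 — 10 statements merged into one kernel-verified Lean document; each statement's English description precedes it below -/
import Mathlib

section
/- In a friendship digraph, every vertex v satisfies d⁺(v) = d⁻(v). -/
open Finset

/-- In a friendship digraph, every vertex `v` satisfies `d⁺(v) = d⁻(v)`. -/
theorem friendship_digraph_outdeg_eq_indeg
    {V : Type*} [Fintype V] [DecidableEq V] (D : V → V → Prop) [DecidableRel D]
    (irrefl : ∀ v : V, ¬ D v v)
    (friendship : ∀ u v : V, u ≠ v → ∃! w : V, D u w ∧ D v w)
    (nontrivial : 1 < Fintype.card V) :
    ∀ v : V, (univ.filter (fun w => D v w)).card = (univ.filter (fun w => D w v)).card := by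
  classical
  have hle : ∀ v : V, (univ.filter (fun w => D w v)).card ≤
      (univ.filter (fun w => D v w)).card := by
    intro v
    have hne : ∀ x, D x v → x ≠ v := fun x hx h => irrefl v (h ▸ hx)
    apply Finset.card_le_card_of_injOn
      (fun x => if h : D x v then ((friendship x v (hne x h)).exists).choose else x)
    · intro x hx
      simp only [coe_filter, Set.mem_setOf_eq, mem_filter, mem_univ, true_and] at hx ⊢
      rw [dif_pos hx]
      exact ((friendship x v (hne x hx)).exists).choose_spec.2
    · intro x hx y hy hxy
      simp only [coe_filter, Set.mem_setOf_eq, mem_univ, true_and] at hx hy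
      simp only [dif_pos hx, dif_pos hy] at hxy
      by_contra hne'
      obtain ⟨w, hw, huniq⟩ := friendship x y hne'
      have hx' := ((friendship x v (hne x hx)).exists).choose_spec
      have hy' := ((friendship y v (hne y hy)).exists).choose_spec
      have h1 : v = w := huniq v ⟨hx, hy⟩
      have h2 : ((friendship x v (hne x hx)).exists).choose = w :=
        huniq _ ⟨hx'.1, hxy ▸ hy'.1⟩
      have h3 : ((friendship x v (hne x hx)).exists).choose = v := h2.trans h1.symm
      rw [h3] at hx'
      exact irrefl v hx'.2
  have hsum : ∑ v : V, (univ.filter (fun w => D w v)).card =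
      ∑ v : V, (univ.filter (fun w => D v w)).card := by
    simp only [Finset.card_filter]
    rw [Finset.sum_comm]
  intro v
  exact ((Finset.sum_eq_sum_iff_of_le (fun i _ => hle i)).mp hsum v (mem_univ v)).symm
end

section
/- In a friendship digraph of order n, every vertex v satisfies ∑_{u ∈ N⁺(v)} (d⁻(u) − 1) = n − 1. -/
open Finset

/-- In a friendship digraph of order `n`, every vertex `v` satisfies
`∑_{u ∈ N⁺(v)} (d⁻(u) − 1) = n − 1`. -/
theorem friendship_digraph_sum_indeg_sub_one
    {V : Type*} [Fintype V] [DecidableEq V] (D : V → V → Prop) [DecidableRel D]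
    (irrefl : ∀ v : V, ¬ D v v)
    (friendship : ∀ u v : V, u ≠ v → ∃! w : V, D u w ∧ D v w)
    (nontrivial : 1 < Fintype.card V) :
    ∀ v : V, ∑ u ∈ univ.filter (fun w => D v w),
        ((univ.filter (fun x => D x u)).card - 1) = Fintype.card V - 1 := by
  intro v
  have key : ∀ u ∈ univ.filter (fun w => D v w),
      (univ.filter (fun x => D x u)).card - 1
        = ((univ.filter (fun x => D x u)).erase v).card := by
    intro u hu
    simp only [mem_filter, mem_univ, true_and] at hu
    rw [Finset.card_erase_of_mem (by simp [hu])]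
  rw [Finset.sum_congr rfl key]
  have hdisj : ∀ u₁ ∈ univ.filter (fun w => D v w), ∀ u₂ ∈ univ.filter (fun w => D v w),
      u₁ ≠ u₂ → Disjoint ((univ.filter (fun x => D x u₁)).erase v)
        ((univ.filter (fun x => D x u₂)).erase v) := by
    intro u₁ h₁ u₂ h₂ hne
    simp only [mem_filter, mem_univ, true_and] at h₁ h₂
    rw [Finset.disjoint_left]
    intro x hx₁ hx₂
    simp only [mem_erase, mem_filter, mem_univ, true_and] at hx₁ hx₂
    exact hne ((friendship v x (fun h => hx₁.1 h.symm)).unique ⟨h₁, hx₁.2⟩ ⟨h₂, hx₂.2⟩)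
  rw [← Finset.card_biUnion hdisj]
  have hun : (univ.filter (fun w => D v w)).biUnion
      (fun u => (univ.filter (fun x => D x u)).erase v) = univ.erase v := by
    ext x
    simp only [mem_biUnion, mem_erase, mem_filter, mem_univ, true_and, and_true]
    constructor
    · rintro ⟨u, -, hxv, -⟩; exact hxv
    · intro hxv
      obtain ⟨w, ⟨hvw, hxw⟩, -⟩ := friendship v x (Ne.symm hxv)
      exact ⟨w, hvw, hxv, hxw⟩
  rw [hun, Finset.card_erase_of_mem (mem_univ v), Finset.card_univ]
end

section
/- If a friendship digraph D has a vertex v with N⁺(v) = V(D) − {v}, then every vertex other than v has out-degree exactly 2. -/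
open Finset

/-- If a friendship digraph `D` has a vertex `v` with `N⁺(v) = V(D) − {v}`,
then every vertex other than `v` has out-degree exactly 2. -/
theorem friendship_digraph_dominating_vertex
    {V : Type*} [Fintype V] [DecidableEq V] (D : V → V → Prop) [DecidableRel D]
    (irrefl : ∀ v : V, ¬ D v v)
    (friendship : ∀ u v : V, u ≠ v → ∃! w : V, D u w ∧ D v w)
    (nontrivial : 1 < Fintype.card V)
    (v : V) (hv : ∀ w : V, D v w ↔ w ≠ v) :
    ∀ u : V, u ≠ v → (univ.filter (fun w => D u w)).card = 2 := by
  intro u hu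
  obtain ⟨w, ⟨huw, hvw⟩, hw⟩ := friendship u v hu
  have hwv : w ≠ v := (hv w).mp hvw
  have huw' : u ≠ w := fun h => irrefl u (h ▸ huw)
  -- show D u v
  obtain ⟨t, ⟨hut, hwt⟩, ht⟩ := friendship u w huw'
  have htv : t = v := by
    by_contra h
    have : t = w := hw t ⟨hut, (hv t).mpr h⟩
    exact irrefl w (this ▸ hwt)
  have huv : D u v := htv ▸ hut
  have : univ.filter (fun x => D u x) = {v, w} := by
    ext x
    simp only [mem_filter, mem_univ, true_and, mem_insert, mem_singleton]
    constructor
    · intro hx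
      by_cases h : x = v
      · exact Or.inl h
      · exact Or.inr (hw x ⟨hx, (hv x).mpr h⟩)
    · rintro (rfl | rfl)
      · exact huv
      · exact huw
  rw [this, card_insert_of_notMem (by simp [Ne.symm hwv]), card_singleton]
end

section
/- If D is a friendship digraph, then the reverse digraph D⁻ (obtained by reversing the direction of every arc) is also a friendship digraph; equivalently, in a friendship digraph any two distinct vertices have exactly one common in-neighbor. -/
open Finset

/-- If `D` is a friendship digraph, then the reverse digraph is also a friendship
digraph: any two distinct vertices of `D` have exactly one common in-neighbor. -/
theorem friendship_digraph_reverse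
    {V : Type*} [Fintype V] [DecidableEq V] (D : V → V → Prop) [DecidableRel D]
    (irrefl : ∀ v : V, ¬ D v v)
    (friendship : ∀ u v : V, u ≠ v → ∃! w : V, D u w ∧ D v w)
    (nontrivial : 1 < Fintype.card V) :
    ∀ u v : V, u ≠ v → ∃! w : V, D w u ∧ D w v := by
  classical
  -- Step 1: at most one common in-neighbor
  have uniq_in : ∀ u v : V, u ≠ v → ∀ w₁ w₂ : V,
      (D w₁ u ∧ D w₁ v) → (D w₂ u ∧ D w₂ v) → w₁ = w₂ := by
    intro u v huv w₁ w₂ h₁ h₂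
    by_contra hw
    obtain ⟨w, _, hw2⟩ := friendship w₁ w₂ hw
    exact huv ((hw2 u ⟨h₁.1, h₂.1⟩).trans (hw2 v ⟨h₁.2, h₂.2⟩).symm)
  set inN : V → Finset V := fun w => univ.filter (fun x => D x w) with hinN
  set outN : V → Finset V := fun w => univ.filter (fun a => D w a) with houtN
  have hmemin : ∀ w x : V, x ∈ inN w ↔ D x w := by
    intro w x; simp [hinN]
  have hmemout : ∀ w a : V, a ∈ outN w ↔ D w a := by
    intro w a; simp [houtN]
  -- Step 2: indeg ≤ outdeg
  have deg_le : ∀ w : V, (inN w).card ≤ (outN w).card := by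
    intro w
    -- the map sending an in-neighbor x of w to the unique common out-neighbor of x and w
    have hne : ∀ x : V, D x w → x ≠ w := fun x hx h => irrefl w (h ▸ hx)
    have hgex : ∀ x : V, D x w → ∃ z : V, D x z ∧ D w z := by
      intro x hx
      obtain ⟨z, hz, -⟩ := friendship x w (hne x hx)
      exact ⟨z, hz⟩
    let g : V → V := fun x => if h : D x w then (hgex x h).choose else x
    have hg : ∀ x : V, (h : D x w) → D x (g x) ∧ D w (g x) := by
      intro x h
      have : g x = (hgex x h).choose := dif_pos h
      rw [this]
      exact (hgex x h).choose_spec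
    apply Finset.card_le_card_of_injOn g
    · intro x hx
      exact (hmemout _ _).2 (hg x ((hmemin _ x).1 hx)).2
    · intro x hx y hy hxy
      by_contra hne'
      have hxw := (hmemin _ x).1 hx
      have hyw := (hmemin _ y).1 hy
      have hzx := hg x hxw
      have hzy := hg y hyw
      -- x and y have common out-neighbors w and g x
      have hgw : g x ≠ w := fun h => irrefl w (h ▸ hzx.2)
      obtain ⟨z, -, hz2⟩ := friendship x y hne'
      have e1 : w = z := hz2 w ⟨hxw, hyw⟩
      have e2 : g x = z := hz2 (g x) ⟨hzx.1, hxy ▸ hzy.1⟩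
      exact hgw (e2.trans e1.symm)
  -- Step 3: counting.  The off-diagonal is partitioned by unique common out-neighbors.
  have hcov_in : univ.biUnion (fun w => (inN w).offDiag) = (univ : Finset V).offDiag := by
    ext p
    rw [mem_biUnion, mem_offDiag]
    constructor
    · rintro ⟨w, -, hw⟩
      rw [mem_offDiag] at hw
      exact ⟨mem_univ _, mem_univ _, hw.2.2⟩
    · rintro ⟨-, -, hne⟩
      obtain ⟨w, hw1, -⟩ := friendship p.1 p.2 hne
      refine ⟨w, mem_univ w, ?_⟩
      rw [mem_offDiag]
      exact ⟨(hmemin w p.1).2 hw1.1, (hmemin w p.2).2 hw1.2, hne⟩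
  have hdisj_in : ∀ w₁ ∈ (univ : Finset V), ∀ w₂ ∈ (univ : Finset V), w₁ ≠ w₂ →
      Disjoint ((inN w₁).offDiag) ((inN w₂).offDiag) := by
    intro w₁ _ w₂ _ hne
    rw [Finset.disjoint_left]
    rintro ⟨u, v⟩ h1 h2
    rw [mem_offDiag] at h1 h2
    obtain ⟨hu1, hv1, huv⟩ := h1
    obtain ⟨hu2, hv2, -⟩ := h2
    obtain ⟨z, -, hz⟩ := friendship u v huv
    exact hne ((hz w₁ ⟨(hmemin _ u).1 hu1, (hmemin _ v).1 hv1⟩).trans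
      (hz w₂ ⟨(hmemin _ u).1 hu2, (hmemin _ v).1 hv2⟩).symm)
  have hdisj_out : ∀ w₁ ∈ (univ : Finset V), ∀ w₂ ∈ (univ : Finset V), w₁ ≠ w₂ →
      Disjoint ((outN w₁).offDiag) ((outN w₂).offDiag) := by
    intro w₁ _ w₂ _ hne
    rw [Finset.disjoint_left]
    rintro ⟨u, v⟩ h1 h2
    rw [mem_offDiag] at h1 h2
    obtain ⟨hu1, hv1, huv⟩ := h1
    obtain ⟨hu2, hv2, -⟩ := h2
    exact hne (uniq_in u v huv w₁ w₂ ⟨(hmemout _ u).1 hu1, (hmemout _ v).1 hv1⟩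
      ⟨(hmemout _ u).1 hu2, (hmemout _ v).1 hv2⟩)
  have hsub : univ.biUnion (fun w => (outN w).offDiag) ⊆ (univ : Finset V).offDiag := by
    apply Finset.biUnion_subset.2
    intro w _
    exact Finset.offDiag_mono (Finset.subset_univ _)
  -- cardinality squeeze
  have hkey : ((univ : Finset V).offDiag).card ≤
      (univ.biUnion (fun w => (outN w).offDiag)).card := by
    rw [← hcov_in, Finset.card_biUnion hdisj_in, Finset.card_biUnion hdisj_out]
    apply Finset.sum_le_sum
    intro w _
    rw [Finset.offDiag_card, Finset.offDiag_card]
    have h := deg_le w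
    calc (inN w).card * (inN w).card - (inN w).card
        = (inN w).card * ((inN w).card - 1) := by
          rw [Nat.mul_sub_one, Nat.mul_comm]
      _ ≤ (outN w).card * ((outN w).card - 1) :=
          Nat.mul_le_mul h (Nat.sub_le_sub_right h 1)
      _ = (outN w).card * (outN w).card - (outN w).card := by
          rw [Nat.mul_sub_one, Nat.mul_comm]
  have heq : univ.biUnion (fun w => (outN w).offDiag) = (univ : Finset V).offDiag :=
    Finset.eq_of_subset_of_card_le hsub hkey
  -- conclude
  intro u v huv
  have hmem : (u, v) ∈ (univ : Finset V).offDiag := by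
    rw [mem_offDiag]; exact ⟨mem_univ u, mem_univ v, huv⟩
  rw [← heq, mem_biUnion] at hmem
  obtain ⟨w, -, hw⟩ := hmem
  rw [mem_offDiag] at hw
  have h1 : D w u := (hmemout w u).1 hw.1
  have h2 : D w v := (hmemout w v).1 hw.2.1
  exact ⟨w, ⟨h1, h2⟩, fun w' hw' => uniq_in u v huv w' w hw' ⟨h1, h2⟩⟩
end

section
/- In a friendship digraph of order n, for any pair of distinct vertices u and v one has (d⁻(u) − 1)(d⁻(v) − 1) ≤ n − 2. -/
open Finset

/-- In a friendship digraph of order `n`, for any pair of distinct vertices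
`u` and `v` one has `(d⁻(u) − 1)(d⁻(v) − 1) ≤ n − 2`. -/
theorem friendship_digraph_indeg_product_bound
    {V : Type*} [Fintype V] [DecidableEq V] (D : V → V → Prop) [DecidableRel D]
    (irrefl : ∀ v : V, ¬ D v v)
    (friendship : ∀ u v : V, u ≠ v → ∃! w : V, D u w ∧ D v w)
    (nontrivial : 1 < Fintype.card V) :
    ∀ u v : V, u ≠ v →
      ((univ.filter (fun x => D x u)).card - 1) * ((univ.filter (fun x => D x v)).card - 1)
        ≤ Fintype.card V - 2 := by
  intro u v huv
  classical
  set A := univ.filter (fun x => D x u ∧ ¬ D x v) with hA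
  set B := univ.filter (fun x => D x v ∧ ¬ D x u) with hB
  have hcap : ∀ a b : V, D a u → D a v → D b u → D b v → a = b := by
    intro a b hau hav hbu hbv
    by_contra hne
    obtain ⟨w, _, huniq⟩ := friendship a b hne
    exact huv ((huniq u ⟨hau, hbu⟩).trans (huniq v ⟨hav, hbv⟩).symm)
  have hAcard : (univ.filter (fun x => D x u)).card - 1 ≤ A.card := by
    have hsub : (univ.filter (fun x => D x u)) ⊆ A ∪ univ.filter (fun x => D x u ∧ D x v) := by
      intro x hx
      simp only [mem_filter, mem_univ, true_and] at hx
      by_cases h : D x v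
      · exact mem_union_right _ (by simp [hx, h])
      · exact mem_union_left _ (by simp [hA, hx, h])
    have h1 : (univ.filter (fun x => D x u ∧ D x v)).card ≤ 1 := by
      apply card_le_one.2
      intro a ha b hb
      simp only [mem_filter, mem_univ, true_and] at ha hb
      exact hcap a b ha.1 ha.2 hb.1 hb.2
    have := (card_le_card hsub).trans
      ((card_union_le _ _).trans (Nat.add_le_add_left h1 A.card))
    omega
  have hBcard : (univ.filter (fun x => D x v)).card - 1 ≤ B.card := by
    have hsub : (univ.filter (fun x => D x v)) ⊆ B ∪ univ.filter (fun x => D x u ∧ D x v) := by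
      intro x hx
      simp only [mem_filter, mem_univ, true_and] at hx
      by_cases h : D x u
      · exact mem_union_right _ (by simp [hx, h])
      · exact mem_union_left _ (by simp [hB, hx, h])
    have h1 : (univ.filter (fun x => D x u ∧ D x v)).card ≤ 1 := by
      apply card_le_one.2
      intro a ha b hb
      simp only [mem_filter, mem_univ, true_and] at ha hb
      exact hcap a b ha.1 ha.2 hb.1 hb.2
    have := (card_le_card hsub).trans
      ((card_union_le _ _).trans (Nat.add_le_add_left h1 B.card))
    omega
  have hinj : (A ×ˢ B).card ≤ (univ.filter (fun x => x ≠ u ∧ x ≠ v)).card := by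
    apply card_le_card_of_injOn
      (fun p => if h : p.1 ≠ p.2 then (friendship p.1 p.2 h).choose else p.1)
    · intro p hp
      simp only [mem_coe, mem_product, hA, hB, mem_filter, mem_univ, true_and] at hp
      obtain ⟨⟨hau, hanv⟩, hbv, hbnu⟩ := hp
      have hne : p.1 ≠ p.2 := by
        intro h; rw [h] at hau; exact hbnu hau
      dsimp only
      rw [dif_pos hne]
      obtain ⟨hw1, hw2⟩ := (friendship p.1 p.2 hne).choose_spec.1
      simp only [mem_coe, mem_filter, mem_univ, true_and]
      constructor
      · intro h; rw [h] at hw2; exact hbnu hw2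
      · intro h; rw [h] at hw1; exact hanv hw1
    · intro p hp q hq hfq
      simp only [mem_coe, mem_product, hA, hB, mem_filter, mem_univ, true_and] at hp hq
      obtain ⟨⟨hau, hanv⟩, hbv, hbnu⟩ := hp
      obtain ⟨⟨hau', hanv'⟩, hbv', hbnu'⟩ := hq
      have hnep : p.1 ≠ p.2 := by intro h; rw [h] at hau; exact hbnu hau
      have hneq : q.1 ≠ q.2 := by intro h; rw [h] at hau'; exact hbnu' hau'
      dsimp only at hfq
      rw [dif_pos hnep, dif_pos hneq] at hfq
      obtain ⟨hpw1, hpw2⟩ := (friendship p.1 p.2 hnep).choose_spec.1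
      obtain ⟨hqw1, hqw2⟩ := (friendship q.1 q.2 hneq).choose_spec.1
      set w := (friendship p.1 p.2 hnep).choose with hw
      rw [← hfq] at hqw1 hqw2
      have hwu : w ≠ u := by intro h; rw [h] at hpw2; exact hbnu hpw2
      have hwv : w ≠ v := by intro h; rw [h] at hpw1; exact hanv hpw1
      have h1 : p.1 = q.1 := by
        by_contra hne
        obtain ⟨z, _, huniq⟩ := friendship p.1 q.1 hne
        exact hwu ((huniq w ⟨hpw1, hqw1⟩).trans (huniq u ⟨hau, hau'⟩).symm)
      have h2 : p.2 = q.2 := by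
        by_contra hne
        obtain ⟨z, _, huniq⟩ := friendship p.2 q.2 hne
        exact hwv ((huniq w ⟨hpw2, hqw2⟩).trans (huniq v ⟨hbv, hbv'⟩).symm)
      exact Prod.ext h1 h2
  have hC : (univ.filter (fun x => x ≠ u ∧ x ≠ v)).card = Fintype.card V - 2 := by
    have heq : (univ.filter (fun x => x ≠ u ∧ x ≠ v)) = univ \ {u, v} := by
      ext x
      simp [not_or]
    rw [heq, card_sdiff_of_subset (by simp), card_univ,
      card_insert_of_notMem (by simp [huv]), card_singleton]
  calc ((univ.filter (fun x => D x u)).card - 1) * ((univ.filter (fun x => D x v)).card - 1)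
      ≤ A.card * B.card := Nat.mul_le_mul hAcard hBcard
    _ = (A ×ˢ B).card := (card_product _ _).symm
    _ ≤ (univ.filter (fun x => x ≠ u ∧ x ≠ v)).card := hinj
    _ = Fintype.card V - 2 := hC
end

section
/- Let D be a friendship digraph and let u and v be two distinct vertices such that (u,v) is not an arc of D or (v,u) is not an arc of D. Then d⁺(u) = d⁺(v). -/
open Finset

section aux

variable {V : Type*} [Fintype V] [DecidableEq V]

private lemma fd_double_count (E : V → V → Prop) [DecidableRel E]
    (s : Finset (V × V)) :
    ∑ p ∈ s, (univ.filter (fun w => E w p.1 ∧ E w p.2)).card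
      = ∑ w : V, (s.filter (fun p => E w p.1 ∧ E w p.2)).card := by
  simp only [Finset.card_filter]
  exact Finset.sum_comm' (by simp)

private lemma fd_key_ineq (E : V → V → Prop) [DecidableRel E]
    (hirr : ∀ v : V, ¬ E v v)
    (hfr : ∀ u v : V, u ≠ v → ∃! w : V, E u w ∧ E v w)
    (u v : V) (huv : ¬ E u v) :
    (univ.filter (fun p => E p v)).card ≤ (univ.filter (fun w => E u w)).card := by
  classical
  set f : V → V := fun p => if h : u ≠ p then (hfr u p h).choose else p with hf
  have hne : ∀ p, E p v → u ≠ p := by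
    intro p hp he; exact huv (he ▸ hp)
  have hspec : ∀ p (hp : E p v), E u (f p) ∧ E p (f p) := by
    intro p hp
    have h := hne p hp
    simp only [hf, dif_pos h]
    exact (hfr u p h).choose_spec.1
  apply Finset.card_le_card_of_injOn f
  · intro p hp
    simp only [mem_coe, coe_filter, Set.mem_setOf_eq, mem_filter, mem_univ, true_and] at hp ⊢
    exact (hspec p hp).1
  · intro p hp p' hp' hee
    simp only [coe_filter, Set.mem_setOf_eq, mem_univ, true_and] at hp hp'
    by_contra hne'
    have h1 := hspec p hp
    have h2 := hspec p' hp'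
    rw [hee] at h1
    -- f p' is a common out-neighbor of p and p', and so is v
    obtain ⟨w, _, hw⟩ := hfr p p' hne'
    have e1 : f p' = w := hw _ ⟨h1.2, h2.2⟩
    have e2 : v = w := hw _ ⟨hp, hp'⟩
    exact huv (e2 ▸ e1 ▸ h1.1)

private lemma fd_deg_eq (E : V → V → Prop) [DecidableRel E]
    (hirr : ∀ v : V, ¬ E v v)
    (hfr : ∀ u v : V, u ≠ v → ∃! w : V, E u w ∧ E v w) (v : V) :
    (univ.filter (fun p => E p v)).card = (univ.filter (fun w => E v w)).card := by
  have hle : ∀ x ∈ (univ : Finset V),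
      (univ.filter (fun p => E p x)).card ≤ (univ.filter (fun w => E x w)).card :=
    fun x _ => fd_key_ineq E hirr hfr x x (hirr x)
  have hsum : ∑ x : V, (univ.filter (fun p => E p x)).card
      = ∑ x : V, (univ.filter (fun w => E x w)).card := by
    simp only [Finset.card_filter]
    exact Finset.sum_comm
  exact (Finset.sum_eq_sum_iff_of_le hle).mp hsum v (mem_univ v)

private lemma fd_rev_friend (E : V → V → Prop) [DecidableRel E]
    (hirr : ∀ v : V, ¬ E v v)
    (hfr : ∀ u v : V, u ≠ v → ∃! w : V, E u w ∧ E v w) :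
    ∀ u v : V, u ≠ v → ∃! w : V, E w u ∧ E w v := by
  classical
  -- at most one common in-neighbor
  have hone : ∀ u v : V, u ≠ v →
      (univ.filter (fun w => E w u ∧ E w v)).card ≤ 1 := by
    intro u v huv
    apply Finset.card_le_one.mpr
    intro a ha b hb
    simp only [mem_filter, mem_univ, true_and] at ha hb
    by_contra hab
    obtain ⟨w, _, hw⟩ := hfr a b hab
    exact huv ((hw u ⟨ha.1, hb.1⟩).trans (hw v ⟨ha.2, hb.2⟩).symm)
  -- counting over off-diagonal pairs
  have hout1 : ∀ p ∈ (univ : Finset V).offDiag,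
      (univ.filter (fun w => E p.1 w ∧ E p.2 w)).card = 1 := by
    intro p hp
    rw [Finset.mem_offDiag] at hp
    obtain ⟨w, hw, huniq⟩ := hfr p.1 p.2 hp.2.2
    rw [Finset.card_eq_one]
    refine ⟨w, ?_⟩
    ext x
    simp only [mem_filter, mem_univ, true_and, mem_singleton]
    exact ⟨fun h => huniq x h, fun h => h ▸ hw⟩
  have e1 : ∑ p ∈ (univ : Finset V).offDiag,
      (univ.filter (fun w => E w p.1 ∧ E w p.2)).card
      = ∑ w : V, ((univ.filter (fun x => E w x)).offDiag).card := by
    rw [fd_double_count E]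
    apply Finset.sum_congr rfl
    intro w _
    congr 1
    ext ⟨a, b⟩
    simp only [mem_filter, Finset.mem_offDiag, mem_univ, true_and]
    tauto
  have e2 : ∑ p ∈ (univ : Finset V).offDiag,
      (univ.filter (fun w => E p.1 w ∧ E p.2 w)).card
      = ∑ w : V, ((univ.filter (fun x => E x w)).offDiag).card := by
    have := fd_double_count (fun a b => E b a) ((univ : Finset V).offDiag)
    rw [this]
    apply Finset.sum_congr rfl
    intro w _
    congr 1
    ext ⟨a, b⟩
    simp only [mem_filter, Finset.mem_offDiag, mem_univ, true_and]
    tauto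
  have e3 : ∑ w : V, ((univ.filter (fun x => E x w)).offDiag).card
      = ∑ w : V, ((univ.filter (fun x => E w x)).offDiag).card := by
    apply Finset.sum_congr rfl
    intro w _
    rw [Finset.offDiag_card, Finset.offDiag_card, fd_deg_eq E hirr hfr w]
  have esum : ∑ p ∈ (univ : Finset V).offDiag,
      (univ.filter (fun w => E w p.1 ∧ E w p.2)).card
      = ∑ p ∈ (univ : Finset V).offDiag, 1 := by
    rw [e1, ← e3, ← e2]
    exact Finset.sum_congr rfl hout1
  have hin1 : ∀ p ∈ (univ : Finset V).offDiag,
      (univ.filter (fun w => E w p.1 ∧ E w p.2)).card = 1 := by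
    intro p hp
    refine (Finset.sum_eq_sum_iff_of_le ?_).mp esum p hp
    intro q hq
    rw [Finset.mem_offDiag] at hq
    exact hone q.1 q.2 hq.2.2
  intro u v huv
  have h := hin1 (u, v) (by rw [Finset.mem_offDiag]; exact ⟨mem_univ u, mem_univ v, huv⟩)
  rw [Finset.card_eq_one] at h
  obtain ⟨w, hw⟩ := h
  have hmem : ∀ x, (E x u ∧ E x v) ↔ x = w := by
    intro x
    rw [← mem_singleton, ← hw]
    simp
  exact ⟨w, (hmem w).mpr rfl, fun x hx => (hmem x).mp hx⟩

private lemma fd_main (E : V → V → Prop) [DecidableRel E]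
    (hirr : ∀ v : V, ¬ E v v)
    (hfr : ∀ u v : V, u ≠ v → ∃! w : V, E u w ∧ E v w)
    (u v : V) (huv : ¬ E u v) :
    (univ.filter (fun w => E u w)).card = (univ.filter (fun w => E v w)).card := by
  have h1 : (univ.filter (fun p => E p v)).card ≤ (univ.filter (fun w => E u w)).card :=
    fd_key_ineq E hirr hfr u v huv
  have h2 : (univ.filter (fun w => E u w)).card ≤ (univ.filter (fun p => E p v)).card := by
    have := fd_key_ineq (fun a b => E b a) hirr (fd_rev_friend E hirr hfr) v u huv
    simpa using this
  have h3 := fd_deg_eq E hirr hfr v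
  omega

end aux

/-- In a friendship digraph, if `u ≠ v` and `(u,v)` is not an arc or `(v,u)`
is not an arc, then `d⁺(u) = d⁺(v)`. -/
theorem friendship_digraph_nonadjacent_same_outdeg
    {V : Type*} [Fintype V] [DecidableEq V] (D : V → V → Prop) [DecidableRel D]
    (irrefl : ∀ v : V, ¬ D v v)
    (friendship : ∀ u v : V, u ≠ v → ∃! w : V, D u w ∧ D v w)
    (nontrivial : 1 < Fintype.card V)
    (u v : V) (huv : u ≠ v) (harc : ¬ D u v ∨ ¬ D v u) :
    (univ.filter (fun w => D u w)).card = (univ.filter (fun w => D v w)).card := by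
  rcases harc with h | h
  · exact fd_main D irrefl friendship u v h
  · exact (fd_main D irrefl friendship v u h).symm
end

section
/- Every friendship digraph is either a fancy wheel digraph or a regular digraph. Moreover, if it is a regular digraph, then there is an integer k ≥ 2 such that every vertex has out-degree k and in-degree k and the digraph has exactly k² − k + 1 vertices. -/
open Finset

/-- A fancy wheel digraph: there is exactly one vertex `v` with
`N⁺(v) = N⁻(v) = V − {v}`, and every other vertex has exactly one out-neighbor
different from `v` and exactly one in-neighbor different from `v` (i.e. `D − v`
is a vertex-disjoint union of directed cycles). -/
def IsFancyWheel {V : Type*} (D : V → V → Prop) : Prop :=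
  ∃ v : V, (∀ w : V, w ≠ v → D v w ∧ D w v) ∧
    (∀ u : V, (∀ w : V, w ≠ u → D u w ∧ D w u) → u = v) ∧
    (∀ u : V, u ≠ v → (∃! w : V, w ≠ v ∧ D u w) ∧ (∃! w : V, w ≠ v ∧ D w u))

set_option linter.unusedSectionVars false

section Aux

variable {V : Type*} [Fintype V] [DecidableEq V] {D : V → V → Prop} [DecidableRel D]

/-- Two distinct vertices have at most one common in-neighbor. -/
private lemma uniq_common_in
    (friendship : ∀ u v : V, u ≠ v → ∃! w : V, D u w ∧ D v w)
    {u v w w' : V} (huv : u ≠ v)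
    (h1 : D w u) (h2 : D w v) (h3 : D w' u) (h4 : D w' v) : w = w' := by
  by_contra hne
  obtain ⟨z, _, hz⟩ := friendship w w' hne
  exact huv ((hz u ⟨h1, h3⟩).trans (hz v ⟨h2, h4⟩).symm)

/-- In-degree is at most out-degree. -/
private lemma card_in_le_card_out
    (irrefl : ∀ v : V, ¬ D v v)
    (friendship : ∀ u v : V, u ≠ v → ∃! w : V, D u w ∧ D v w)
    (p : V) :
    (univ.filter (fun w => D w p)).card ≤ (univ.filter (fun w => D p w)).card := by
  have hpj : ∀ j : V, D j p → p ≠ j := fun j hj h => irrefl p (h ▸ hj)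
  refine Finset.card_le_card_of_injOn
    (fun j => if h : D j p then ((friendship p j (hpj j h)).exists).choose else j) ?_ ?_
  · intro j hj
    have hj1 : D j p := (mem_filter.mp hj).2
    simp only [dif_pos hj1, mem_filter, mem_univ, true_and]
    exact Finset.mem_coe.mpr (mem_filter.mpr ⟨mem_univ _, ((friendship p j (hpj j hj1)).exists).choose_spec.1⟩)
  · intro j hj j' hj' heq
    have hj1 : D j p := (mem_filter.mp (Finset.mem_coe.mp hj)).2
    have hj1' : D j' p := (mem_filter.mp (Finset.mem_coe.mp hj')).2
    simp only [dif_pos hj1, dif_pos hj1'] at heq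
    have s1 := ((friendship p j (hpj j hj1)).exists).choose_spec
    have s2 := ((friendship p j' (hpj j' hj1')).exists).choose_spec
    rw [← heq] at s2
    have hwp : ((friendship p j (hpj j hj1)).exists).choose ≠ p := by
      intro h
      rw [h] at s1
      exact irrefl p s1.1
    exact uniq_common_in friendship hwp s1.2 hj1 s2.2 hj1'

/-- If `¬ D u y` then in-degree of `y` is at most out-degree of `u`. -/
private lemma L_one
    (friendship : ∀ u v : V, u ≠ v → ∃! w : V, D u w ∧ D v w)
    {u y : V} (hno : ¬ D u y) :
    (univ.filter (fun w => D w y)).card ≤ (univ.filter (fun w => D u w)).card := by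
  have hzu : ∀ z : V, D z y → z ≠ u := fun z hz h => hno (h ▸ hz)
  refine Finset.card_le_card_of_injOn
    (fun z => if h : D z y then ((friendship z u (hzu z h)).exists).choose else z) ?_ ?_
  · intro z hz
    have hz1 : D z y := (mem_filter.mp hz).2
    simp only [dif_pos hz1, mem_filter, mem_univ, true_and]
    exact Finset.mem_coe.mpr (mem_filter.mpr ⟨mem_univ _, ((friendship z u (hzu z hz1)).exists).choose_spec.2⟩)
  · intro z hz z' hz' heq
    have hz1 : D z y := (mem_filter.mp (Finset.mem_coe.mp hz)).2
    have hz1' : D z' y := (mem_filter.mp (Finset.mem_coe.mp hz')).2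
    simp only [dif_pos hz1, dif_pos hz1'] at heq
    have s1 := ((friendship z u (hzu z hz1)).exists).choose_spec
    have s2 := ((friendship z' u (hzu z' hz1')).exists).choose_spec
    rw [← heq] at s2
    have hwy : ((friendship z u (hzu z hz1)).exists).choose ≠ y := by
      intro h
      rw [h] at s1
      exact hno s1.2
    exact uniq_common_in friendship hwy s1.1 hz1 s2.1 hz1'

/-- If `¬ D u y` then out-degree of `u` is at most in-degree of `y`
(given that the reverse digraph is a friendship digraph). -/
private lemma L_two
    (friendship : ∀ u v : V, u ≠ v → ∃! w : V, D u w ∧ D v w)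
    (revfriend : ∀ u v : V, u ≠ v → ∃! w : V, D w u ∧ D w v)
    {u y : V} (hno : ¬ D u y) :
    (univ.filter (fun w => D u w)).card ≤ (univ.filter (fun w => D w y)).card := by
  have hxy : ∀ x : V, D u x → x ≠ y := fun x hx h => hno (h ▸ hx)
  refine Finset.card_le_card_of_injOn
    (fun x => if h : D u x then ((revfriend x y (hxy x h)).exists).choose else x) ?_ ?_
  · intro x hx
    have hx1 : D u x := (mem_filter.mp hx).2
    simp only [dif_pos hx1, mem_filter, mem_univ, true_and]
    exact Finset.mem_coe.mpr (mem_filter.mpr ⟨mem_univ _, ((revfriend x y (hxy x hx1)).exists).choose_spec.2⟩)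
  · intro x hx x' hx' heq
    have hx1 : D u x := (mem_filter.mp (Finset.mem_coe.mp hx)).2
    have hx1' : D u x' := (mem_filter.mp (Finset.mem_coe.mp hx')).2
    simp only [dif_pos hx1, dif_pos hx1'] at heq
    have s1 := ((revfriend x y (hxy x hx1)).exists).choose_spec
    have s2 := ((revfriend x' y (hxy x' hx1')).exists).choose_spec
    rw [← heq] at s2
    have hwu : ((revfriend x y (hxy x hx1)).exists).choose ≠ u := by
      intro h
      rw [h] at s1
      exact hno s1.2
    exact ExistsUnique.unique (friendship _ u hwu) ⟨s1.1, hx1⟩ ⟨s2.1, hx1'⟩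

/-- The partition identity: `∑_{x ∈ N⁺(u)} (d⁻(x) − 1) = n − 1`. -/
private lemma O1
    (friendship : ∀ u v : V, u ≠ v → ∃! w : V, D u w ∧ D v w)
    (u : V) :
    ∑ x ∈ univ.filter (fun x => D u x), ((univ.filter (fun w => D w x)).card - 1)
      = Fintype.card V - 1 := by
  have hpart : univ.erase u = (univ.filter (fun x => D u x)).biUnion
      (fun x => (univ.filter (fun w => D w x)).erase u) := by
    ext v
    simp only [mem_erase, mem_biUnion, mem_filter, mem_univ, true_and, and_true]
    constructor
    · intro hv
      obtain ⟨x, ⟨hux, hvx⟩, -⟩ := friendship u v (Ne.symm hv)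
      exact ⟨x, hux, hv, hvx⟩
    · rintro ⟨x, hux, hv, hvx⟩
      exact hv
  have hdisj : ∀ x ∈ univ.filter (fun x => D u x), ∀ y ∈ univ.filter (fun x => D u x),
      x ≠ y → Disjoint ((univ.filter (fun w => D w x)).erase u)
        ((univ.filter (fun w => D w y)).erase u) := by
    intro x hx y hy hxy
    rw [Finset.disjoint_left]
    intro v hvx hvy
    simp only [mem_erase, mem_filter, mem_univ, true_and] at hvx hvy hx hy
    exact hxy (ExistsUnique.unique (friendship u v (Ne.symm hvx.1)) ⟨hx, hvx.2⟩ ⟨hy, hvy.2⟩)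
  have hcard := Finset.card_biUnion hdisj
  rw [← hpart, card_erase_of_mem (mem_univ u), Finset.card_univ] at hcard
  have hstep : ∑ x ∈ univ.filter (fun x => D u x), ((univ.filter (fun w => D w x)).card - 1)
      = ∑ x ∈ univ.filter (fun x => D u x), ((univ.filter (fun w => D w x)).erase u).card := by
    refine Finset.sum_congr rfl (fun x hx => ?_)
    simp only [mem_filter, mem_univ, true_and] at hx
    have hu : u ∈ univ.filter (fun w => D w x) := mem_filter.mpr ⟨mem_univ u, hx⟩
    exact (card_erase_of_mem hu).symm
  rw [hstep]
  exact hcard.symm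

/-- Counting ordered pairs via common out-neighbors. -/
private lemma pairs_count
    (friendship : ∀ u v : V, u ≠ v → ∃! w : V, D u w ∧ D v w) :
    ∑ x : V, ((univ.filter (fun w => D w x)).offDiag).card
      = (univ : Finset V).offDiag.card := by
  have hdisj : ∀ x ∈ (univ : Finset V), ∀ y ∈ (univ : Finset V), x ≠ y →
      Disjoint ((univ.filter (fun w => D w x)).offDiag)
        ((univ.filter (fun w => D w y)).offDiag) := by
    intro x _ y _ hxy
    rw [Finset.disjoint_left]
    intro p hpx hpy
    rw [mem_offDiag] at hpx hpy
    obtain ⟨h1, h2, hne⟩ := hpx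
    obtain ⟨h3, h4, -⟩ := hpy
    simp only [mem_filter, mem_univ, true_and] at h1 h2 h3 h4
    exact hxy (ExistsUnique.unique (friendship p.1 p.2 hne) ⟨h1, h2⟩ ⟨h3, h4⟩)
  rw [← Finset.card_biUnion hdisj]
  congr 1
  ext p
  simp only [mem_biUnion, mem_univ, true_and, mem_offDiag, mem_filter]
  constructor
  · rintro ⟨x, h1, h2, hne⟩
    exact hne
  · intro hne
    obtain ⟨x, ⟨h1, h2⟩, -⟩ := friendship p.1 p.2 hne
    exact ⟨x, h1, h2, hne⟩

/-- Double counting common in-neighbors over ordered pairs. -/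
private lemma double_count :
    ∑ p ∈ (univ : Finset V).offDiag, (univ.filter (fun x => D x p.1 ∧ D x p.2)).card
      = ∑ x : V, ((univ.filter (fun w => D x w)).offDiag).card := by
  have h2 : ∀ x : V, ((univ.filter (fun w => D x w)).offDiag).card
      = ∑ p ∈ (univ : Finset V).offDiag, (if D x p.1 ∧ D x p.2 then 1 else 0) := by
    intro x
    rw [← Finset.card_filter]
    congr 1
    ext p
    simp only [mem_filter, mem_offDiag, mem_univ, true_and]
    tauto
  simp only [h2, Finset.card_filter]
  exact Finset.sum_comm

end Aux

/-- digraph version of the Friendship Theorem: every friendship digraph is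
a fancy wheel digraph or a regular digraph; in the regular case there is an integer `k ≥ 2`
such that every vertex has out-degree `k` and in-degree `k`, and the order is `k² − k + 1`. -/
theorem friendship_digraph_theorem
    {V : Type*} [Fintype V] [DecidableEq V] (D : V → V → Prop) [DecidableRel D]
    (irrefl : ∀ v : V, ¬ D v v)
    (friendship : ∀ u v : V, u ≠ v → ∃! w : V, D u w ∧ D v w)
    (nontrivial : 1 < Fintype.card V) :
    IsFancyWheel D ∨
      ∃ k : ℕ, 2 ≤ k ∧
        (∀ v : V, (univ.filter (fun w => D v w)).card = k ∧
          (univ.filter (fun w => D w v)).card = k) ∧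
        Fintype.card V = k ^ 2 - k + 1 := by
  classical
  set n := Fintype.card V with hn
  -- n ≥ 3
  obtain ⟨u0, v0, huv0⟩ := Fintype.exists_pair_of_one_lt_card nontrivial
  obtain ⟨w0, ⟨hu0, hv0⟩, -⟩ := friendship u0 v0 huv0
  have hw0u : w0 ≠ u0 := fun h => irrefl u0 (h ▸ hu0)
  have hw0v : w0 ≠ v0 := fun h => irrefl v0 (h ▸ hv0)
  have hn3 : 3 ≤ n := by
    have hcard : ({u0, v0, w0} : Finset V).card = 3 := by
      rw [card_insert_of_notMem (by simp [huv0, Ne.symm hw0u]),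
        card_insert_of_notMem (by simp [Ne.symm hw0v]), card_singleton]
    calc 3 = ({u0, v0, w0} : Finset V).card := hcard.symm
    _ ≤ n := Finset.card_le_univ _
  -- pointwise out-degree = in-degree
  have hba : ∀ p : V, (univ.filter (fun w => D w p)).card ≤ (univ.filter (fun w => D p w)).card :=
    card_in_le_card_out irrefl friendship
  have hsum : ∑ v : V, (univ.filter (fun w => D w v)).card
      = ∑ v : V, (univ.filter (fun w => D v w)).card := by
    simp only [Finset.card_filter]
    exact Finset.sum_comm
  have hab : ∀ p : V, (univ.filter (fun w => D p w)).card = (univ.filter (fun w => D w p)).card := by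
    have h := (Finset.sum_eq_sum_iff_of_le (fun i _ => hba i)).mp hsum
    exact fun p => (h p (mem_univ p)).symm
  -- the reverse digraph is a friendship digraph
  have hrev : ∀ u v : V, u ≠ v → ∃! w : V, D w u ∧ D w v := by
    have hsum2 : ∑ p ∈ (univ : Finset V).offDiag,
        (univ.filter (fun x => D x p.1 ∧ D x p.2)).card = (univ : Finset V).offDiag.card := by
      rw [double_count]
      rw [show (∑ x : V, ((univ.filter (fun w => D x w)).offDiag).card)
          = ∑ x : V, ((univ.filter (fun w => D w x)).offDiag).card from
        Finset.sum_congr rfl (fun x _ => by rw [offDiag_card, offDiag_card, hab x])]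
      exact pairs_count friendship
    have hle : ∀ p ∈ (univ : Finset V).offDiag,
        (univ.filter (fun x => D x p.1 ∧ D x p.2)).card ≤ 1 := by
      intro p hp
      rw [Finset.card_le_one]
      intro a ha b hb
      simp only [mem_filter, mem_univ, true_and] at ha hb
      exact uniq_common_in friendship (mem_offDiag.mp hp).2.2 ha.1 ha.2 hb.1 hb.2
    have hone : ∀ p ∈ (univ : Finset V).offDiag,
        (univ.filter (fun x => D x p.1 ∧ D x p.2)).card = 1 := by
      have := (Finset.sum_eq_sum_iff_of_le hle).mp
        (by rw [hsum2, Finset.card_eq_sum_ones])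
      exact this
    intro u v huv
    have hp : (u, v) ∈ (univ : Finset V).offDiag := mem_offDiag.mpr ⟨mem_univ _, mem_univ _, huv⟩
    obtain ⟨w, hw⟩ := Finset.card_eq_one.mp (hone (u, v) hp)
    refine ⟨w, ?_, ?_⟩
    · have h : w ∈ univ.filter (fun x => D x u ∧ D x v) := hw ▸ mem_singleton_self w
      simpa using h
    · intro y hy
      have h : y ∈ univ.filter (fun x => D x u ∧ D x v) := by simpa using hy
      rw [hw] at h
      exact mem_singleton.mp h
  -- non-adjacent vertices have equal out-degree
  have keyEq : ∀ u y : V, ¬ D u y →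
      (univ.filter (fun w => D u w)).card = (univ.filter (fun w => D y w)).card := by
    intro u y hno
    have h1 := L_one friendship hno
    have h2 := L_two friendship hrev hno
    rw [le_antisymm h2 h1, ← hab y]
  by_cases hexists : ∃ x : V, (univ.filter (fun w => D w x)).card = n - 1
  · -- there is a universal-in vertex
    obtain ⟨x, hbx⟩ := hexists
    have hax : (univ.filter (fun w => D x w)).card = n - 1 := by rw [hab x, hbx]
    have hsub1 : univ.filter (fun w => D x w) ⊆ univ.erase x := by
      intro w hw
      simp only [mem_filter, mem_univ, true_and] at hw
      exact mem_erase.mpr ⟨fun h => irrefl x (h ▸ hw), mem_univ w⟩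
    have hsub2 : univ.filter (fun w => D w x) ⊆ univ.erase x := by
      intro w hw
      simp only [mem_filter, mem_univ, true_and] at hw
      exact mem_erase.mpr ⟨fun h => irrefl x (h ▸ hw), mem_univ w⟩
    have hSx : univ.filter (fun w => D x w) = univ.erase x :=
      eq_of_subset_of_card_le hsub1 (by rw [card_erase_of_mem (mem_univ x), card_univ, hax])
    have hTx : univ.filter (fun w => D w x) = univ.erase x :=
      eq_of_subset_of_card_le hsub2 (by rw [card_erase_of_mem (mem_univ x), card_univ, hbx])
    have hxout : ∀ w, w ≠ x → D x w := by
      intro w hw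
      have h : w ∈ univ.filter (fun w => D x w) := by
        rw [hSx]; exact mem_erase.mpr ⟨hw, mem_univ w⟩
      simpa using h
    have hxin : ∀ w, w ≠ x → D w x := by
      intro w hw
      have h : w ∈ univ.filter (fun w => D w x) := by
        rw [hTx]; exact mem_erase.mpr ⟨hw, mem_univ w⟩
      simpa using h
    have hby2 : ∀ y, y ≠ x → (univ.filter (fun w => D w y)).card = 2 := by
      intro y hy
      have hmemx : x ∈ univ.filter (fun w => D w y) :=
        mem_filter.mpr ⟨mem_univ x, hxout y hy⟩
      have hle1 : ((univ.filter (fun w => D w y)).erase x).card ≤ 1 := by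
        rw [card_le_one]
        intro z hz z' hz'
        simp only [mem_erase, mem_filter, mem_univ, true_and] at hz hz'
        exact uniq_common_in friendship (Ne.symm hy)
          (hxin z hz.1) hz.2 (hxin z' hz'.1) hz'.2
      have hub : (univ.filter (fun w => D w y)).card ≤ 2 := by
        have h := card_erase_of_mem hmemx
        omega
      have hlb : 2 ≤ (univ.filter (fun w => D w y)).card := by
        obtain ⟨w, ⟨hwx, hwy⟩, -⟩ := hrev x y (Ne.symm hy)
        have hwne : w ≠ x := fun h => irrefl x (h ▸ hwx)
        have hsub : ({x, w} : Finset V) ⊆ univ.filter (fun w => D w y) := by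
          intro t ht
          rcases mem_insert.mp ht with rfl | ht'
          · exact mem_filter.mpr ⟨mem_univ _, hxout y hy⟩
          · rw [mem_singleton.mp ht']
            exact mem_filter.mpr ⟨mem_univ _, hwy⟩
        calc 2 = ({x, w} : Finset V).card := by
              rw [card_insert_of_notMem (by simp [Ne.symm hwne]), card_singleton]
        _ ≤ _ := card_le_card hsub
      omega
    have hay2 : ∀ y, y ≠ x → (univ.filter (fun w => D y w)).card = 2 := by
      intro y hy
      rw [hab y, hby2 y hy]
    rcases Nat.lt_or_ge n 4 with h4 | h4
    · -- n = 3 : the 2-regular case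
      have hn3' : n = 3 := by omega
      right
      refine ⟨2, le_refl 2, ?_, ?_⟩
      · intro v
        by_cases hvx : v = x
        · subst hvx
          constructor
          · rw [hax]; omega
          · rw [hbx]; omega
        · exact ⟨hay2 v hvx, hby2 v hvx⟩
      · have h223 : (2:ℕ) ^ 2 - 2 + 1 = 3 := by norm_num
        rw [h223]
        exact hn3'
    · -- n ≥ 4 : fancy wheel
      left
      refine ⟨x, fun w hw => ⟨hxout w hw, hxin w hw⟩, ?_, ?_⟩
      · intro u hu
        by_contra hux
        have hsubu : univ.erase u ⊆ univ.filter (fun w => D u w) := by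
          intro w hw
          exact mem_filter.mpr ⟨mem_univ w, (hu w (mem_erase.mp hw).1).1⟩
        have hcu := card_le_card hsubu
        rw [card_erase_of_mem (mem_univ u), card_univ, hay2 u hux] at hcu
        omega
      · intro u hu
        constructor
        · have hxmem : x ∈ univ.filter (fun w => D u w) :=
            mem_filter.mpr ⟨mem_univ x, hxin u hu⟩
          have hcard1 : ((univ.filter (fun w => D u w)).erase x).card = 1 := by
            rw [card_erase_of_mem hxmem, hay2 u hu]
          obtain ⟨c, hc⟩ := card_eq_one.mp hcard1
          refine ⟨c, ?_, ?_⟩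
          · have h : c ∈ (univ.filter (fun w => D u w)).erase x := hc ▸ mem_singleton_self c
            simp only [mem_erase, mem_filter, mem_univ, true_and] at h
            exact ⟨h.1, h.2⟩
          · intro y hy
            have h : y ∈ (univ.filter (fun w => D u w)).erase x := by
              simp only [mem_erase, mem_filter, mem_univ, true_and]
              exact ⟨hy.1, hy.2⟩
            rw [hc] at h
            exact mem_singleton.mp h
        · have hxmem : x ∈ univ.filter (fun w => D w u) :=
            mem_filter.mpr ⟨mem_univ x, hxout u hu⟩
          have hcard1 : ((univ.filter (fun w => D w u)).erase x).card = 1 := by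
            rw [card_erase_of_mem hxmem, hby2 u hu]
          obtain ⟨c, hc⟩ := card_eq_one.mp hcard1
          refine ⟨c, ?_, ?_⟩
          · have h : c ∈ (univ.filter (fun w => D w u)).erase x := hc ▸ mem_singleton_self c
            simp only [mem_erase, mem_filter, mem_univ, true_and] at h
            exact ⟨h.1, h.2⟩
          · intro y hy
            have h : y ∈ (univ.filter (fun w => D w u)).erase x := by
              simp only [mem_erase, mem_filter, mem_univ, true_and]
              exact ⟨hy.1, hy.2⟩
            rw [hc] at h
            exact mem_singleton.mp h
  · -- no universal-in vertex : the regular case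
    push_neg at hexists
    have hble : ∀ x : V, (univ.filter (fun w => D w x)).card < n - 1 := by
      intro x
      have hsub : univ.filter (fun w => D w x) ⊆ univ.erase x := by
        intro w hw
        simp only [mem_filter, mem_univ, true_and] at hw
        exact mem_erase.mpr ⟨fun h => irrefl x (h ▸ hw), mem_univ w⟩
      have h1 := card_le_card hsub
      rw [card_erase_of_mem (mem_univ x), card_univ, ← hn] at h1
      exact lt_of_le_of_ne h1 (hexists x)
    right
    have hconst : ∀ s t : V,
        (univ.filter (fun w => D s w)).card = (univ.filter (fun w => D t w)).card := by
      by_contra hcon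
      push_neg at hcon
      obtain ⟨s, t, hst⟩ := hcon
      have cross : ∀ p q : V,
          (univ.filter (fun w => D p w)).card ≠ (univ.filter (fun w => D q w)).card →
          D p q ∧ D q p := by
        intro p q hpq
        constructor
        · by_contra hno
          exact hpq (keyEq p q hno)
        · by_contra hno
          exact hpq (keyEq q p hno).symm
      set c := (univ.filter (fun w => D s w)).card with hc
      set X := univ.filter (fun z : V => (univ.filter (fun w => D z w)).card = c) with hX
      set Y := univ.filter (fun z : V => (univ.filter (fun w => D z w)).card ≠ c) with hY
      have hsX : s ∈ X := by
        rw [hX]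
        exact mem_filter.mpr ⟨mem_univ s, rfl⟩
      have htY : t ∈ Y := by
        rw [hY]
        exact mem_filter.mpr ⟨mem_univ t, fun h => hst h.symm⟩
      have hcross : ∀ p ∈ X, ∀ q ∈ Y, D p q ∧ D q p := by
        intro p hp q hq
        rw [hX, mem_filter] at hp
        rw [hY, mem_filter] at hq
        exact cross p q (by rw [hp.2]; exact fun h => hq.2 h.symm)
      have hindeg : ∀ z : V, (∀ w, w ≠ z → D w z) → False := by
        intro z hz
        have hsub : univ.erase z ⊆ univ.filter (fun w => D w z) := by
          intro w hw
          exact mem_filter.mpr ⟨mem_univ w, hz w (mem_erase.mp hw).1⟩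
        have h1 := card_le_card hsub
        rw [card_erase_of_mem (mem_univ z), card_univ, ← hn] at h1
        have := hble z
        omega
      by_cases hX1 : X.card ≤ 1
      · refine hindeg s (fun z hz => ?_)
        have hzY : z ∈ Y := by
          rw [hY]
          refine mem_filter.mpr ⟨mem_univ z, fun hzc => ?_⟩
          have hzX : z ∈ X := by rw [hX]; exact mem_filter.mpr ⟨mem_univ z, hzc⟩
          exact hz (card_le_one.mp hX1 z hzX s hsX)
        exact (hcross s hsX z hzY).2
      · by_cases hY1 : Y.card ≤ 1
        · refine hindeg t (fun z hz => ?_)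
          have hzX : z ∈ X := by
            rw [hX]
            refine mem_filter.mpr ⟨mem_univ z, ?_⟩
            by_contra hzc
            have hzY : z ∈ Y := by rw [hY]; exact mem_filter.mpr ⟨mem_univ z, hzc⟩
            exact hz (card_le_one.mp hY1 z hzY t htY)
          exact (hcross z hzX t htY).1
        · push_neg at hX1 hY1
          obtain ⟨x1, hx1, x2, hx2, hx12⟩ := Finset.one_lt_card.mp hX1
          obtain ⟨z1, hz1, z2, hz2, hz12⟩ := Finset.one_lt_card.mp hY1
          have d11 := (hcross x1 hx1 z1 hz1).2
          have d12 := (hcross x1 hx1 z2 hz2).2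
          have d21 := (hcross x2 hx2 z1 hz1).2
          have d22 := (hcross x2 hx2 z2 hz2).2
          exact hx12 (ExistsUnique.unique (friendship z1 z2 hz12) ⟨d11, d12⟩ ⟨d21, d22⟩)
    set k := (univ.filter (fun w => D u0 w)).card with hk
    have hak : ∀ v : V, (univ.filter (fun w => D v w)).card = k := fun v => hconst v u0
    have hbk : ∀ v : V, (univ.filter (fun w => D w v)).card = k := fun v => by
      rw [← hab v]; exact hak v
    have hO1 := O1 friendship u0
    have hkk : k * (k - 1) = n - 1 := by
      rw [← hO1]
      rw [Finset.sum_congr rfl (fun x _ => by rw [hbk x] : ∀ x ∈ univ.filter (fun x => D u0 x),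
        (univ.filter (fun w => D w x)).card - 1 = k - 1)]
      rw [Finset.sum_const, smul_eq_mul]
    have hk2 : 2 ≤ k := by
      by_contra h
      push_neg at h
      have h0 : k * (k - 1) = 0 := by
        interval_cases k <;> rfl
      rw [h0] at hkk
      omega
    refine ⟨k, hk2, fun v => ⟨hak v, hbk v⟩, ?_⟩
    have hk1 : k ^ 2 - k = k * (k - 1) := by
      rcases k with _ | m
      · rfl
      · have h : (m + 1) ^ 2 = (m + 1) * m + (m + 1) := by ring
        rw [Nat.succ_sub_one]
        exact Nat.sub_eq_of_eq_add h
    rw [hk1, hkk]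
    omega
end

section
/- Let k ≥ 2 be an integer. If there exists a (k² − k + 1, k, 1)-SBIBD, then there exists a k-regular friendship digraph (necessarily of order k² − k + 1). -/
open Finset

/-- In a symmetric design with λ = 1 (given here by the counting hypotheses),
any two distinct blocks meet in exactly one point. -/
lemma SBIBD_dual_inter (k : ℕ) (hk : 2 ≤ k) {P ι : Type} [Fintype ι] [DecidableEq P]
    [DecidableEq ι] (B : ι → Finset P)
    (hι : Fintype.card ι = k ^ 2 - k + 1)
    (hsize : ∀ i, (B i).card = k)
    (hrep : ∀ p : P, (univ.filter (fun i => p ∈ B i)).card = k)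
    (hpair : ∀ p q : P, p ≠ q → ∃! i : ι, p ∈ B i ∧ q ∈ B i)
    {i j : ι} (hij : i ≠ j) : (B i ∩ B j).card = 1 := by
  have le1 : ∀ m : ι, m ≠ i → (B i ∩ B m).card ≤ 1 := by
    intro m hm
    rw [Finset.card_le_one]
    intro a ha b hb
    by_contra hab
    obtain ⟨c, _, hcu⟩ := hpair a b hab
    simp only [Finset.mem_inter] at ha hb
    have h1 : i = c := hcu i ⟨ha.1, hb.1⟩
    have h2 : m = c := hcu m ⟨ha.2, hb.2⟩
    exact hm (h2.trans h1.symm)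
  -- double counting
  have swap : ∑ m ∈ univ.erase i, (B i ∩ B m).card = k * (k - 1) := by
    have h1 : ∀ m : ι, (B i ∩ B m).card = ∑ p ∈ B i, if p ∈ B m then 1 else 0 := by
      intro m
      rw [← Finset.filter_mem_eq_inter, Finset.card_filter]
    simp only [h1]
    rw [Finset.sum_comm]
    have h2 : ∀ p ∈ B i, (∑ m ∈ univ.erase i, if p ∈ B m then 1 else 0) = k - 1 := by
      intro p hp
      rw [← Finset.card_filter, Finset.filter_erase, Finset.card_erase_of_mem
        (by simp [hp]), hrep p]
    rw [Finset.sum_congr rfl h2, Finset.sum_const, hsize, smul_eq_mul]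
  have hcard : (univ.erase i).card = k * (k - 1) := by
    rw [Finset.card_erase_of_mem (Finset.mem_univ i), Finset.card_univ, hι]
    obtain ⟨m, rfl⟩ : ∃ m, k = m + 2 := ⟨k - 2, by omega⟩
    have h1 : (m + 2) ^ 2 = m * m + 4 * m + 4 := by ring
    have h2 : (m + 2) * (m + 2 - 1) = m * m + 3 * m + 2 := by
      have : m + 2 - 1 = m + 1 := rfl
      rw [this]; ring
    omega
  -- every term is ≤ 1 and sum equals number of terms, so term at j is 1
  by_contra hne
  have h0 : (B i ∩ B j).card < 1 := by
    rcases Nat.lt_or_ge (B i ∩ B j).card 1 with h | h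
    · exact h
    · exact absurd (le_antisymm (le1 j (Ne.symm hij)) h) hne
  have hlt : ∑ m ∈ univ.erase i, (B i ∩ B m).card < ∑ m ∈ univ.erase i, 1 :=
    Finset.sum_lt_sum (fun m hm => le1 m (Finset.ne_of_mem_erase hm))
      ⟨j, Finset.mem_erase.mpr ⟨Ne.symm hij, Finset.mem_univ j⟩, h0⟩
  rw [swap, Finset.sum_const, smul_eq_mul, mul_one, hcard] at hlt
  exact lt_irrefl _ hlt

/-- For an integer `k ≥ 2`, if there exists a `(k² − k + 1, k, 1)`-SBIBD,
then there exists a `k`-regular friendship digraph (necessarily of order `k² − k + 1`). -/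
theorem SBIBD_gives_regular_friendship_digraph
    (k : ℕ) (hk : 2 ≤ k)
    (hSBIBD : ∃ (P ι : Type) (B : ι → Finset P),
      Nat.card P = k ^ 2 - k + 1 ∧ Nat.card ι = k ^ 2 - k + 1 ∧
      (∀ i : ι, (B i).card = k) ∧
      (∀ p : P, {i : ι | p ∈ B i}.ncard = k) ∧
      (∀ p q : P, p ≠ q → ∃! i : ι, p ∈ B i ∧ q ∈ B i)) :
    ∃ (V : Type) (D : V → V → Prop),
      Nat.card V = k ^ 2 - k + 1 ∧
      (∀ v : V, ¬ D v v) ∧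
      (∀ v : V, {w : V | D v w}.ncard = k ∧ {w : V | D w v}.ncard = k) ∧
      (∀ u v : V, u ≠ v → ∃! w : V, D u w ∧ D v w) := by
  classical
  obtain ⟨P, ι, B, hP, hι, hsize, hrep, hpair⟩ := hSBIBD
  have hPfin : Finite P := Nat.finite_of_card_ne_zero (by omega)
  have hιfin : Finite ι := Nat.finite_of_card_ne_zero (by omega)
  cases nonempty_fintype P
  cases nonempty_fintype ι
  have hPcard : Fintype.card P = k ^ 2 - k + 1 := by rwa [Nat.card_eq_fintype_card] at hP
  have hιcard : Fintype.card ι = k ^ 2 - k + 1 := by rwa [Nat.card_eq_fintype_card] at hι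
  have hk2 : 2 * k ≤ k * k := Nat.mul_le_mul_right k hk
  have hkk : k ^ 2 = k * k := sq k
  -- Finset version of the replication hypothesis
  have hrep' : ∀ p : P, (univ.filter (fun i => p ∈ B i)).card = k := by
    intro p
    have : {i : ι | p ∈ B i} = ↑(univ.filter (fun i => p ∈ B i)) := by ext; simp
    have h := hrep p
    rw [this, Set.ncard_coe_finset] at h
    exact h
  -- Hall's condition for the non-incidence bipartite graph
  set t : P → Finset ι := fun p => univ.filter (fun i => p ∉ B i) with ht
  have htcard : ∀ p : P, (t p).card = k ^ 2 - k + 1 - k := by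
    intro p
    have := Finset.card_filter_add_card_filter_not (s := univ)
      (p := fun i : ι => p ∈ B i)
    simp only [Finset.card_univ, hιcard] at this
    have h2 := hrep' p
    simp only [ht]
    omega
  -- the number of points outside a block
  have houtside : ∀ i : ι, (univ.filter (fun p : P => p ∉ B i)).card
      = k ^ 2 - k + 1 - k := by
    intro i
    have := Finset.card_filter_add_card_filter_not (s := (univ : Finset P))
      (p := fun p : P => p ∈ B i)
    simp only [Finset.card_univ, hPcard, Finset.filter_mem_eq_inter,
      Finset.univ_inter] at this
    have h2 := hsize i
    omega
  have hc_pos : 0 < k ^ 2 - k + 1 - k := by omega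
  have hall : ∀ s : Finset P, s.card ≤ (s.biUnion t).card := by
    intro s
    set U := s.biUnion t with hU
    have hsub : ∀ p ∈ s, t p ⊆ U := fun p hp => Finset.subset_biUnion_of_mem t hp
    have key : s.card * (k ^ 2 - k + 1 - k) ≤ U.card * (k ^ 2 - k + 1 - k) := by
      calc s.card * (k ^ 2 - k + 1 - k) = ∑ p ∈ s, (t p).card := by
            rw [Finset.sum_congr rfl (fun p _ => htcard p), Finset.sum_const, smul_eq_mul]
        _ = ∑ p ∈ s, ∑ i ∈ U, (if i ∈ t p then 1 else 0) := by
            refine Finset.sum_congr rfl (fun p hp => ?_)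
            rw [← Finset.card_filter]
            congr 1
            exact (Finset.filter_mem_eq_inter.trans
              (Finset.inter_eq_right.mpr (hsub p hp))).symm
        _ = ∑ i ∈ U, ∑ p ∈ s, (if i ∈ t p then 1 else 0) := Finset.sum_comm
        _ ≤ ∑ i ∈ U, (k ^ 2 - k + 1 - k) := by
            refine Finset.sum_le_sum (fun i _ => ?_)
            rw [← Finset.card_filter]
            calc (s.filter (fun p => i ∈ t p)).card
                ≤ (univ.filter (fun p : P => p ∉ B i)).card := by
                  apply Finset.card_le_card
                  intro p hp
                  simp only [Finset.mem_filter, ht, Finset.mem_univ, true_and] at hp ⊢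
                  exact hp.2
              _ = k ^ 2 - k + 1 - k := houtside i
        _ = U.card * (k ^ 2 - k + 1 - k) := by rw [Finset.sum_const, smul_eq_mul]
    exact Nat.le_of_mul_le_mul_right key hc_pos
  obtain ⟨σ, hσinj, hσmem⟩ := (Finset.all_card_le_biUnion_card_iff_exists_injective t).mp hall
  have hσbij : Function.Bijective σ := by
    rw [Fintype.bijective_iff_injective_and_card, hPcard, hιcard]
    exact ⟨hσinj, rfl⟩
  have hσnotmem : ∀ p : P, p ∉ B (σ p) := by
    intro p
    have := hσmem p
    simp only [ht, Finset.mem_filter] at this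
    exact this.2
  -- define the digraph
  refine ⟨P, fun u w => w ∈ B (σ u), hP, fun v => hσnotmem v, ?_, ?_⟩
  · intro v
    constructor
    · have : {w : P | w ∈ B (σ v)} = ↑(B (σ v)) := by ext; simp
      rw [this, Set.ncard_coe_finset, hsize]
    · have heq : {w : P | v ∈ B (σ w)} = ↑(univ.filter (fun w : P => v ∈ B (σ w))) := by
        ext; simp
      rw [heq, Set.ncard_coe_finset]
      rw [← hrep' v]
      apply Finset.card_bij (fun w _ => σ w)
      · intro w hw
        simp only [Finset.mem_filter, Finset.mem_univ, true_and] at hw ⊢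
        exact hw
      · intro a ha b hb hab
        exact hσinj hab
      · intro i hi
        obtain ⟨w, rfl⟩ := hσbij.2 i
        simp only [Finset.mem_filter, Finset.mem_univ, true_and] at hi
        exact ⟨w, by simp [hi], rfl⟩
  · intro u v huv
    have hij : σ u ≠ σ v := fun h => huv (hσinj h)
    have h1 : (B (σ u) ∩ B (σ v)).card = 1 :=
      SBIBD_dual_inter k hk B hιcard hsize hrep' hpair hij
    obtain ⟨a, ha⟩ := Finset.card_eq_one.mp h1
    refine ⟨a, ?_, ?_⟩
    · have : a ∈ B (σ u) ∩ B (σ v) := ha ▸ Finset.mem_singleton_self a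
      exact ⟨(Finset.mem_inter.mp this).1, (Finset.mem_inter.mp this).2⟩
    · intro w hw
      have : w ∈ B (σ u) ∩ B (σ v) := Finset.mem_inter.mpr hw
      rw [ha, Finset.mem_singleton] at this
      exact this
end

section
/- In a friendship digraph of order n with maximum out-degree Δ⁺(D) < n − 1, all vertices have the same out-degree k for some integer k ≥ 2. -/
open Finset

/-- In a friendship digraph of order `n` with maximum out-degree `Δ⁺(D) < n − 1`,
all vertices have the same out-degree `k` for some integer `k ≥ 2`. -/
theorem friendship_digraph_small_max_outdeg_regular
    {V : Type*} [Fintype V] [DecidableEq V] (D : V → V → Prop) [DecidableRel D]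
    (irrefl : ∀ v : V, ¬ D v v)
    (friendship : ∀ u v : V, u ≠ v → ∃! w : V, D u w ∧ D v w)
    (nontrivial : 1 < Fintype.card V)
    (hmax : univ.sup (fun v => (univ.filter (fun w => D v w)).card) < Fintype.card V - 1) :
    ∃ k : ℕ, 2 ≤ k ∧ ∀ v : V, (univ.filter (fun w => D v w)).card = k := by
  classical
  set n := Fintype.card V with hn
  set d : V → ℕ := fun v => (univ.filter (fun w => D v w)).card with hd
  set r : V → ℕ := fun p => (univ.filter (fun v => D v p)).card with hr
  set k := univ.sup d with hkdef
  -- uniqueness helper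
  have huniq : ∀ u v : V, u ≠ v → ∀ p q : V, D u p → D v p → D u q → D v q → p = q := by
    intro u v h p q hup hvp huq hvq
    obtain ⟨w, _, hw⟩ := friendship u v h
    rw [hw p ⟨hup, hvp⟩, hw q ⟨huq, hvq⟩]
  -- Lemma A
  have lemA : ∀ u p : V, ¬ D u p → r p ≤ d u := by
    intro u p hup
    apply Finset.card_le_card_of_injOn
      (fun v => if h : v ≠ u then (friendship v u h).choose else v)
    · intro v hv
      have hvp : D v p := (mem_filter.mp hv).2
      have hvu : v ≠ u := fun e => hup (e ▸ hvp)
      show (if h : v ≠ u then (friendship v u h).choose else v) ∈ univ.filter (fun w => D u w)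
      rw [dif_pos hvu]
      exact mem_filter.mpr ⟨mem_univ _, ((friendship v u hvu).choose_spec).1.2⟩
    · intro v hv v' hv' heq
      by_contra hne
      have hvp : D v p := (mem_filter.mp hv).2
      have hv'p : D v' p := (mem_filter.mp hv').2
      have hvu : v ≠ u := fun e => hup (e ▸ hvp)
      have hv'u : v' ≠ u := fun e => hup (e ▸ hv'p)
      simp only [dif_pos hvu, dif_pos hv'u] at heq
      have hq : D v (friendship v u hvu).choose ∧ D u (friendship v u hvu).choose :=
        ((friendship v u hvu).choose_spec).1
      have hq' : D v' (friendship v' u hv'u).choose ∧ D u (friendship v' u hv'u).choose :=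
        ((friendship v' u hv'u).choose_spec).1
      have : (friendship v u hvu).choose = p :=
        huniq v v' hne _ p hq.1 (heq ▸ hq'.1) hvp hv'p
      exact hup (this ▸ hq.2)
  -- sum identity
  have hsum : ∑ p : V, r p = ∑ u : V, d u := by
    simp only [hr, hd, Finset.card_filter]
    exact Finset.sum_comm
  have hrd : ∀ p : V, r p = d p := by
    have hle : ∀ p ∈ (univ : Finset V), r p ≤ d p := fun p _ => lemA p p (irrefl p)
    exact fun p => (Finset.sum_eq_sum_iff_of_le hle).mp hsum p (mem_univ p)
  -- degrees ≥ 1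
  have hd1 : ∀ u : V, 1 ≤ d u := by
    intro u
    obtain ⟨v, hv⟩ := Fintype.exists_ne_of_one_lt_card nontrivial u
    obtain ⟨w, ⟨huw, _⟩, _⟩ := friendship u v (Ne.symm hv)
    exact Finset.card_pos.mpr ⟨w, mem_filter.mpr ⟨mem_univ _, huw⟩⟩
  have hk : ∀ v : V, d v ≤ k := fun v => Finset.le_sup (mem_univ v)
  have hne' : Nonempty V := Fintype.card_pos_iff.mp (by omega)
  obtain ⟨u0, _, hu0⟩ := Finset.exists_mem_eq_sup (univ : Finset V) univ_nonempty d
  have hn2 : 2 ≤ n := nontrivial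
  have hkn : k < n - 1 := hmax
  -- arcs to max-degree vertices
  have harc : ∀ v : V, d v < k → ∀ w : V, d w = k → D v w := by
    intro v hvlt w hw
    by_contra h
    have h1 := lemA v w h
    rw [hrd w, hw] at h1
    omega
  -- intersection of out-sets has card 1
  have hcap : ∀ a b : V, a ≠ b →
      ((univ.filter (fun w => D a w)) ∩ (univ.filter (fun w => D b w))).card = 1 := by
    intro a b hab
    obtain ⟨w, ⟨haw, hbw⟩, hw⟩ := friendship a b hab
    rw [Finset.card_eq_one]
    refine ⟨w, Finset.ext fun x => ?_⟩
    simp only [mem_inter, mem_filter, mem_univ, true_and, mem_singleton]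
    constructor
    · rintro ⟨h1, h2⟩; exact hw x ⟨h1, h2⟩
    · rintro rfl; exact ⟨haw, hbw⟩
  -- regularity
  have hreg : ∀ v : V, d v = k := by
    by_contra hc
    push_neg at hc
    obtain ⟨v, hv⟩ := hc
    have hvk : d v < k := lt_of_le_of_ne (hk v) hv
    set M := univ.filter (fun w => d w = k) with hM
    have hMsub : ∀ x : V, d x < k → M ⊆ univ.filter (fun w => D x w) := by
      intro x hx w hwM
      exact mem_filter.mpr ⟨mem_univ _, harc x hx w (mem_filter.mp hwM).2⟩
    have hMne : u0 ∈ M := mem_filter.mpr ⟨mem_univ _, hu0.symm⟩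
    by_cases hex : ∃ v' : V, v' ≠ v ∧ d v' < k
    · obtain ⟨v', hv'v, hv'k⟩ := hex
      have hMcap : M ⊆ (univ.filter (fun w => D v w)) ∩ (univ.filter (fun w => D v' w)) :=
        fun w hw => mem_inter.mpr ⟨hMsub v hvk hw, hMsub v' hv'k hw⟩
      have hM1 : M.card = 1 := le_antisymm
        (le_trans (Finset.card_le_card hMcap) (le_of_eq (hcap v v' (Ne.symm hv'v))))
        (Finset.card_pos.mpr ⟨u0, hMne⟩)
      obtain ⟨w0, hw0⟩ := Finset.card_eq_one.mp hM1
      have hw0M : w0 ∈ M := by rw [hw0]; exact Finset.mem_singleton_self w0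
      have hw0k : d w0 = k := (mem_filter.mp hw0M).2
      have hsub : univ.erase w0 ⊆ univ.filter (fun x => D x w0) := by
        intro x hx
        have hxw : x ≠ w0 := Finset.ne_of_mem_erase hx
        have hxk : d x < k := by
          rcases lt_or_eq_of_le (hk x) with h | h
          · exact h
          · have hxM : x ∈ M := mem_filter.mpr ⟨mem_univ x, h⟩
            rw [hw0] at hxM
            exact absurd (Finset.mem_singleton.mp hxM) hxw
        exact mem_filter.mpr ⟨mem_univ _, harc x hxk w0 hw0k⟩
      have : n - 1 ≤ r w0 := by
        calc n - 1 = (univ.erase w0).card := by rw [Finset.card_erase_of_mem (mem_univ _), Finset.card_univ]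
        _ ≤ _ := Finset.card_le_card hsub
      rw [hrd w0, hw0k] at this
      omega
    · push_neg at hex
      have hsub : univ.erase v ⊆ M := by
        intro x hx
        have hxv : x ≠ v := Finset.ne_of_mem_erase hx
        have h1 := hex x hxv
        have h2 := hk x
        exact mem_filter.mpr ⟨mem_univ _, by omega⟩
      have h1 : n - 1 ≤ M.card := by
        calc n - 1 = (univ.erase v).card := by rw [Finset.card_erase_of_mem (mem_univ _), Finset.card_univ]
        _ ≤ _ := Finset.card_le_card hsub
      have h2 : M.card ≤ d v := Finset.card_le_card (hMsub v hvk)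
      omega
  -- k ≥ 2
  have hk2 : 2 ≤ k := by
    by_contra h
    have hk1 : k = 1 := by have := hd1 u0; rw [hreg u0] at this; omega
    obtain ⟨v, hv⟩ := Fintype.exists_ne_of_one_lt_card nontrivial u0
    have hdu : d u0 = 1 := by rw [hreg u0, hk1]
    have hdv : d v = 1 := by rw [hreg v, hk1]
    obtain ⟨w, hw⟩ := Finset.card_eq_one.mp hdu
    obtain ⟨w', hw'⟩ := Finset.card_eq_one.mp hdv
    have hww' : w = w' := by
      have h1 := hcap u0 v (Ne.symm hv)
      rw [hw, hw'] at h1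
      by_contra hne
      rw [Finset.singleton_inter_of_notMem (by simp [hne])] at h1
      simp at h1
    have hu0w : D u0 w := (mem_filter.mp (hw ▸ Finset.mem_singleton_self w)).2
    have hvw : D v w := by
      have := (mem_filter.mp (hw' ▸ Finset.mem_singleton_self w')).2
      rwa [← hww'] at this
    have h2 : 2 ≤ r w := by
      have : ({u0, v} : Finset V) ⊆ univ.filter (fun x => D x w) := by
        intro x hx
        rcases Finset.mem_insert.mp hx with rfl | hx
        · exact mem_filter.mpr ⟨mem_univ _, hu0w⟩
        · rw [Finset.mem_singleton.mp hx]; exact mem_filter.mpr ⟨mem_univ _, hvw⟩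
      calc 2 = ({u0, v} : Finset V).card := by rw [Finset.card_insert_of_notMem (by simp [Ne.symm hv]), Finset.card_singleton]
      _ ≤ _ := Finset.card_le_card this
    rw [hrd w, hreg w, hk1] at h2
    omega
  exact ⟨k, hk2, hreg⟩
end

section
/- For every prime power q (q = pᵐ with p prime and m a positive integer), setting k = q + 1, there exists a k-regular friendship digraph of order k² − k + 1 = q² + q + 1. -/
open Configuration LinearAlgebra.Projectivization
open scoped LinearAlgebra.Projectivization

section Aux

variable {K : Type} [Field K] [Fintype K]

/-- counting the projective plane over a finite field -/
lemma aux_arith (N n : ℕ) (hn : 2 ≤ n) (h : N * (n - 1) = n ^ 3 - 1) :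
    N = n ^ 2 + n + 1 := by
  obtain ⟨r, rfl⟩ : ∃ r, n = r + 2 := ⟨n - 2, by omega⟩
  have hfac : (((r + 2) ^ 2 + (r + 2) + 1)) * (r + 2 - 1) = (r + 2) ^ 3 - 1 := by
    have e2 : (r + 2) ^ 3 = r ^ 3 + 6 * r ^ 2 + 12 * r + 8 := by ring
    have e3 : ((r + 2) ^ 2 + (r + 2) + 1) * (r + 1) = r ^ 3 + 6 * r ^ 2 + 12 * r + 7 := by ring
    rw [e2]
    have : r + 2 - 1 = r + 1 := by omega
    rw [this, e3]
    omega
  have hpos : 0 < r + 2 - 1 := by omega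
  exact Nat.eq_of_mul_eq_mul_right hpos (by rw [h, ← hfac])

/-- counting the projective plane over a finite field -/
lemma aux_card_proj (hK2 : 2 ≤ Fintype.card K) :
    Nat.card (ℙ K (Fin 3 → K)) = Fintype.card K ^ 2 + Fintype.card K + 1 := by
  classical
  -- the equivalence (ℙ K V) × Kˣ ≃ {v // v ≠ 0}
  let g : (ℙ K (Fin 3 → K)) × Kˣ → {v : Fin 3 → K // v ≠ 0} := fun xa =>
    ⟨(xa.2 : K) • xa.1.rep, smul_ne_zero (Units.ne_zero xa.2) xa.1.rep_nonzero⟩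
  have hg : Function.Bijective g := by
    constructor
    · rintro ⟨x, a⟩ ⟨y, b⟩ h
      have h' : (a : K) • x.rep = (b : K) • y.rep := congrArg Subtype.val h
      have hxy : x = y := by
        have h1 : Projectivization.mk K ((a : K) • x.rep)
            (smul_ne_zero (Units.ne_zero a) x.rep_nonzero) = x := by
          conv_rhs => rw [← x.mk_rep]
          exact (Projectivization.mk_eq_mk_iff K _ _ _ x.rep_nonzero).2 ⟨a, rfl⟩
        have h2 : Projectivization.mk K ((b : K) • y.rep)
            (smul_ne_zero (Units.ne_zero b) y.rep_nonzero) = y := by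
          conv_rhs => rw [← y.mk_rep]
          exact (Projectivization.mk_eq_mk_iff K _ _ _ y.rep_nonzero).2 ⟨b, rfl⟩
        rw [← h1, ← h2]
        congr 1
      subst hxy
      have hab : (a : K) = (b : K) := by
        have h'' : ((a : K) - (b : K)) • x.rep = 0 := by
          rw [sub_smul, h', sub_self]
        rcases smul_eq_zero.1 h'' with h0 | h0
        · exact sub_eq_zero.1 h0
        · exact absurd h0 x.rep_nonzero
      exact Prod.ext rfl (Units.ext hab)
    · rintro ⟨v, hv⟩
      obtain ⟨a, ha⟩ := Projectivization.exists_smul_eq_mk_rep K v hv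
      refine ⟨⟨Projectivization.mk K v hv, a⁻¹⟩, ?_⟩
      apply Subtype.ext
      show (↑a⁻¹ : K) • (Projectivization.mk K v hv).rep = v
      rw [← ha]
      show (↑a⁻¹ : K) • (a : K) • v = v
      rw [smul_smul, Units.inv_mul, one_smul]
  have h1 : Nat.card ({v : Fin 3 → K // v ≠ 0}) = Fintype.card K ^ 3 - 1 := by
    rw [Nat.card_eq_fintype_card]
    have : Fintype.card {v : Fin 3 → K // v ≠ 0} =
        Fintype.card (Fin 3 → K) - Fintype.card {v : Fin 3 → K // v = 0} := by
      simpa using (Fintype.card_subtype_compl (fun v : Fin 3 → K => v = 0))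
    rw [this, Fintype.card_subtype_eq (0 : Fin 3 → K), Fintype.card_fun]
    simp
  have h2 : Nat.card ((ℙ K (Fin 3 → K)) × Kˣ) = Nat.card ({v : Fin 3 → K // v ≠ 0}) :=
    Nat.card_congr (Equiv.ofBijective g hg)
  rw [Nat.card_prod, Nat.card_units, h1, Nat.card_eq_fintype_card (α := K)] at h2
  exact aux_arith _ _ hK2 h2

end Aux

/-- For every prime power `q = p^m` (`p` prime, `m ≥ 1`) and `k = q + 1`,
there exists a `k`-regular friendship digraph of order `k² − k + 1 = q² + q + 1`. -/
theorem prime_power_gives_regular_friendship_digraph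
    (p m : ℕ) (hp : p.Prime) (hm : 0 < m) :
    ∃ (V : Type) (D : V → V → Prop),
      Nat.card V = (p ^ m + 1) ^ 2 - (p ^ m + 1) + 1 ∧
      Nat.card V = (p ^ m) ^ 2 + p ^ m + 1 ∧
      (∀ v : V, ¬ D v v) ∧
      (∀ v : V, {w : V | D v w}.ncard = p ^ m + 1 ∧ {w : V | D w v}.ncard = p ^ m + 1) ∧
      (∀ u v : V, u ≠ v → ∃! w : V, D u w ∧ D v w) := by
  classical
  haveI : Fact p.Prime := ⟨hp⟩
  set q := p ^ m with hqdef
  let K := GaloisField p m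
  haveI : Fintype K := Fintype.ofFinite K
  have hK : Fintype.card K = q := by
    rw [← Nat.card_eq_fintype_card]; exact GaloisField.card p m hm.ne'
  have hq2 : 2 ≤ q := Nat.one_lt_pow hm.ne' hp.one_lt
  let P := ℙ K (Fin 3 → K)
  haveI : Finite ({v : Fin 3 → K // v ≠ 0}) := inferInstance
  haveI hPfin : Finite P := Quotient.finite _
  haveI : Fintype P := Fintype.ofFinite P
  have hcardP : Nat.card P = q ^ 2 + q + 1 := by
    rw [aux_card_proj (by omega), hK]
  -- order of the plane is q
  have hcard_pts : Fintype.card P = ProjectivePlane.order P P ^ 2 + ProjectivePlane.order P P + 1 :=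
    ProjectivePlane.card_points P P
  have horder : ProjectivePlane.order P P = q := by
    set a := ProjectivePlane.order P P
    have h : a ^ 2 + a + 1 = q ^ 2 + q + 1 := by
      rw [← hcard_pts, ← Nat.card_eq_fintype_card, hcardP]
    rcases lt_trichotomy a q with hlt | heq | hgt
    · have : a ^ 2 ≤ q ^ 2 := Nat.pow_le_pow_left hlt.le 2
      omega
    · exact heq
    · have : q ^ 2 ≤ a ^ 2 := Nat.pow_le_pow_left hgt.le 2
      omega
  -- non-incident bijection via Hall
  obtain ⟨f, hfinj, hf⟩ :=
    Configuration.Nondegenerate.exists_injective_of_card_le (P := P) (L := P) le_rfl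
  have hfbij : Function.Bijective f := (Finite.injective_iff_bijective).1 hfinj
  let e : P ≃ P := Equiv.ofBijective f hfbij
  refine ⟨P, fun u w => w ∈ e.symm u, ?_, ?_, ?_, ?_, ?_⟩
  · rw [hcardP]
    have : (q + 1) ^ 2 = q ^ 2 + 2 * q + 1 := by ring
    omega
  · exact hcardP
  · intro v hv
    have : e (e.symm v) = v := e.apply_symm_apply v
    have hv' : f (e.symm v) ∉ (e.symm v : P) := hf (e.symm v)
    rw [show f (e.symm v) = e (e.symm v) from rfl, this] at hv'
    exact hv' hv
  · intro v
    constructor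
    · have h1 : {w : P | w ∈ e.symm v}.ncard = pointCount P (e.symm v) := by
        rw [Set.ncard_eq_toFinset_card', Set.toFinset_setOf, pointCount,
          Nat.card_eq_fintype_card, Fintype.card_subtype]
      rw [h1, ProjectivePlane.pointCount_eq P (e.symm v), horder]
    · have h2 : {w : P | v ∈ e.symm w}.ncard = lineCount P v := by
        rw [Set.ncard_eq_toFinset_card', Set.toFinset_setOf]
        rw [lineCount, Nat.card_eq_fintype_card]
        rw [← Fintype.card_subtype]
        exact Fintype.card_congr (e.symm.subtypeEquiv fun w => Iff.rfl)
      rw [h2, ProjectivePlane.lineCount_eq P v, horder]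
  · intro u v huv
    have hne : e.symm u ≠ e.symm v := fun h => huv (e.symm.injective h)
    exact Configuration.HasPoints.existsUnique_point P P (e.symm u) (e.symm v) hne
end
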